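/- Let Ω ⊂ ℝ^n be a bounded open set, T > 0, q > 0, h ∈ (0,1], and let u, v ∈ L^{q+1}(Ω × (−h, T+h), ℝ^N). Then the finite integration by parts formula ∬_{Ω×(0,T)} Δ_{−h}(⟦u⟧^q) · (v − u) dx dt ≤ ∬_{Ω×(0,T)} Δ_h v · (⟦v⟧^q − ⟦u⟧^q) dx dt − (1/h) ∬_{Ω×(T−h,T)} 𝔟[u(t), v(t+h)] dx dt + (1/h) ∬_{Ω×(−h,0)} 𝔟[u(t), v(t)] dx dt + δ_1(h) + δ_2(h) holds, where δ_1(h) := (1/h) ∬_{Ω×(0,T)} 𝔟[v(t), v(t+h)] dx dt and δ_2(h) := ∬_{Ω×(−h,0)} Δ_h v · (⟦v⟧^q(t+h) − ⟦u⟧^q(t)) dx dt. -/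

import Mathlib

open Real MeasureTheory RealInnerProductSpace

/-- The power `⟦w⟧^α := |w|^{α−1} w` (with `⟦0⟧^α = 0`). -/
noncomputable def vpow {N : ℕ} (α : ℝ) (w : EuclideanSpace ℝ (Fin N)) :
    EuclideanSpace ℝ (Fin N) :=
  ‖w‖ ^ (α - 1) • w

/-- The boundary term `𝔟[u,v] := (1/(q+1))|v|^{q+1} − (1/(q+1))|u|^{q+1} − ⟦u⟧^q · (v − u)`. -/
noncomputable def bdry {N : ℕ} (q : ℝ) (u v : EuclideanSpace ℝ (Fin N)) : ℝ :=
  (1 / (q + 1)) * ‖v‖ ^ (q + 1) - (1 / (q + 1)) * ‖u‖ ^ (q + 1) - ⟪vpow q u, v - u⟫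

section Aux

variable {N : ℕ} {q : ℝ}

lemma norm_vpow (hq : 0 < q) (a : EuclideanSpace ℝ (Fin N)) : ‖vpow q a‖ = ‖a‖ ^ q := by
  rcases eq_or_ne a 0 with rfl | ha
  · simp [vpow, Real.zero_rpow hq.ne']
  · have h0 : (0:ℝ) < ‖a‖ := norm_pos_iff.2 ha
    rw [vpow, norm_smul, Real.norm_eq_abs, abs_of_nonneg (Real.rpow_nonneg (norm_nonneg a) _)]
    rw [Real.rpow_sub h0, Real.rpow_one]
    field_simp

lemma inner_vpow_self (hq : 0 < q) (a : EuclideanSpace ℝ (Fin N)) :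
    ⟪vpow q a, a⟫ = ‖a‖ ^ (q + 1) := by
  rcases eq_or_ne a 0 with rfl | ha
  · simp [vpow, Real.zero_rpow (by positivity : q + 1 ≠ 0)]
  · have h0 : (0:ℝ) < ‖a‖ := norm_pos_iff.2 ha
    rw [vpow, real_inner_smul_left, real_inner_self_eq_norm_sq]
    rw [← Real.rpow_two, ← Real.rpow_add h0]
    ring_nf

lemma id_L (a b c : EuclideanSpace ℝ (Fin N)) :
    ⟪vpow q a - vpow q c, b - a⟫ = -(bdry q a b) + bdry q c b - bdry q c a := by
  simp only [bdry, inner_sub_left, inner_sub_right]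
  ring

lemma id_R1 (a b b' : EuclideanSpace ℝ (Fin N)) :
    ⟪b' - b, vpow q b - vpow q a⟫ = bdry q a b' - bdry q a b - bdry q b b' := by
  rw [real_inner_comm]
  simp only [bdry, inner_sub_left, inner_sub_right]
  ring

lemma id_R5 (a b b' : EuclideanSpace ℝ (Fin N)) :
    ⟪b' - b, vpow q b' - vpow q a⟫ = bdry q b' b + bdry q a b' - bdry q a b := by
  rw [real_inner_comm]
  simp only [bdry, inner_sub_left, inner_sub_right]
  ring

lemma young_sharp (hq : 0 < q) {s t : ℝ} (hs : 0 ≤ s) (ht : 0 ≤ t) :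
    s ^ q * t ≤ (q / (q+1)) * s ^ (q+1) + (1 / (q+1)) * t ^ (q+1) := by
  have hw : q / (q+1) + 1 / (q+1) = 1 := by field_simp
  have := Real.geom_mean_le_arith_mean2_weighted
    (by positivity : (0:ℝ) ≤ q/(q+1)) (by positivity : (0:ℝ) ≤ 1/(q+1))
    (by positivity : (0:ℝ) ≤ s ^ (q+1)) (by positivity : (0:ℝ) ≤ t ^ (q+1)) hw
  calc s ^ q * t = (s ^ (q+1)) ^ (q/(q+1)) * (t ^ (q+1)) ^ (1/(q+1)) := by
        rw [← Real.rpow_mul hs, ← Real.rpow_mul ht]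
        congr 1 <;> congr 1 <;> field_simp <;> simp
    _ ≤ _ := this

lemma bdry_nonneg (hq : 0 < q) (a b : EuclideanSpace ℝ (Fin N)) : 0 ≤ bdry q a b := by
  have h1 : ⟪vpow q a, b - a⟫ = ⟪vpow q a, b⟫ - ‖a‖ ^ (q+1) := by
    rw [inner_sub_right, inner_vpow_self hq]
  have h2 : ⟪vpow q a, b⟫ ≤ ‖a‖ ^ q * ‖b‖ := by
    calc ⟪vpow q a, b⟫ ≤ ‖vpow q a‖ * ‖b‖ := real_inner_le_norm _ _
      _ = _ := by rw [norm_vpow hq]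
  have h3 := young_sharp hq (norm_nonneg a) (norm_nonneg b)
  have hp : (0:ℝ) < q + 1 := by linarith
  rw [bdry, h1]
  have : q / (q+1) * ‖a‖ ^ (q+1) + 1/(q+1) * ‖b‖ ^ (q+1) - ‖a‖^(q+1)
      = 1/(q+1) * ‖b‖^(q+1) - 1/(q+1) * ‖a‖^(q+1) := by field_simp; ring
  nlinarith [h2, h3]

lemma rpow_succ' {x : ℝ} (hx : 0 ≤ x) (hq : 0 < q) : x ^ q * x = x ^ (q+1) :=
  (Real.rpow_add_one' hx (by positivity)).symm

lemma young_crude (hq : 0 < q) {s t : ℝ} (hs : 0 ≤ s) (ht : 0 ≤ t) :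
    s ^ q * t ≤ s ^ (q+1) + t ^ (q+1) := by
  rcases le_total s t with hle | hle
  · calc s ^ q * t ≤ t ^ q * t := by gcongr
      _ = t ^ (q+1) := rpow_succ' ht hq
      _ ≤ _ := le_add_of_nonneg_left (by positivity)
  · calc s ^ q * t ≤ s ^ q * s := by gcongr
      _ = s ^ (q+1) := rpow_succ' hs hq
      _ ≤ _ := le_add_of_nonneg_right (by positivity)

lemma abs_bdry_le (hq : 0 < q) (a b : EuclideanSpace ℝ (Fin N)) :
    |bdry q a b| ≤ 4 * (‖a‖ ^ (q+1) + ‖b‖ ^ (q+1)) := by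
  have hp : (0:ℝ) < q + 1 := by linarith
  have h2 : |⟪vpow q a, b - a⟫| ≤ ‖a‖ ^ q * (‖b‖ + ‖a‖) := by
    calc |⟪vpow q a, b - a⟫| ≤ ‖vpow q a‖ * ‖b - a‖ := abs_real_inner_le_norm _ _
      _ ≤ ‖a‖ ^ q * (‖b‖ + ‖a‖) := by
          rw [norm_vpow hq]
          gcongr
          exact (norm_sub_le _ _)
  have h3 : ‖a‖ ^ q * ‖b‖ ≤ ‖a‖ ^ (q+1) + ‖b‖ ^ (q+1) :=
    young_crude hq (norm_nonneg _) (norm_nonneg _)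
  have h4 : ‖a‖ ^ q * ‖a‖ = ‖a‖ ^ (q+1) := rpow_succ' (norm_nonneg _) hq
  have hinv : (1:ℝ)/(q+1) ≤ 1 := by
    rw [div_le_one hp]; linarith
  have h5 : (1/(q+1)) * ‖b‖^(q+1) ≤ ‖b‖^(q+1) :=
    mul_le_of_le_one_left (by positivity) hinv
  have h6 : (1/(q+1)) * ‖a‖^(q+1) ≤ ‖a‖^(q+1) :=
    mul_le_of_le_one_left (by positivity) hinv
  have htri : |bdry q a b| ≤ |(1/(q+1)) * ‖b‖^(q+1)| + |(1/(q+1)) * ‖a‖^(q+1)|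
      + |⟪vpow q a, b - a⟫| := by
    rw [bdry]
    exact (abs_sub _ _).trans (by gcongr; exact abs_sub _ _)
  have hab1 : |(1/(q+1)) * ‖b‖^(q+1)| = (1/(q+1)) * ‖b‖^(q+1) := abs_of_nonneg (by positivity)
  have hab2 : |(1/(q+1)) * ‖a‖^(q+1)| = (1/(q+1)) * ‖a‖^(q+1) := abs_of_nonneg (by positivity)
  rw [hab1, hab2] at htri
  rw [mul_add] at h2
  have hA : (0:ℝ) ≤ ‖a‖ ^ (q+1) := by positivity
  have hB : (0:ℝ) ≤ ‖b‖ ^ (q+1) := by positivity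
  linarith

lemma measurable_vpow (q : ℝ) : Measurable (vpow q : EuclideanSpace ℝ (Fin N) → _) := by
  classical
  have hm : Measurable fun w : EuclideanSpace ℝ (Fin N) => ‖w‖ ^ (q - 1) := by
    have heq : (fun w : EuclideanSpace ℝ (Fin N) => ‖w‖ ^ (q - 1)) =
        fun w : EuclideanSpace ℝ (Fin N) =>
          if w = 0 then (0:ℝ) ^ (q - 1) else Real.exp (Real.log ‖w‖ * (q - 1)) := by
      funext w
      by_cases hw : w = 0
      · simp [hw]
      · rw [if_neg hw, Real.rpow_def_of_pos (norm_pos_iff.2 hw)]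
    rw [heq]
    exact Measurable.ite (MeasurableSet.singleton 0) measurable_const
      (Real.measurable_exp.comp ((Real.measurable_log.comp measurable_norm).mul measurable_const))
  exact hm.smul measurable_id

lemma aesm_norm_rpow {α : Type*} [MeasurableSpace α] {μ : Measure α} (hq : 0 < q)
    {g : α → EuclideanSpace ℝ (Fin N)} (hg : AEStronglyMeasurable g μ) :
    AEStronglyMeasurable (fun z => ‖g z‖ ^ (q+1)) μ :=
  (Real.continuous_rpow_const (by positivity)).comp_aestronglyMeasurable hg.norm

lemma aesm_bdry {α : Type*} [MeasurableSpace α] {μ : Measure α} (hq : 0 < q)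
    {f g : α → EuclideanSpace ℝ (Fin N)}
    (hf : AEStronglyMeasurable f μ) (hg : AEStronglyMeasurable g μ) :
    AEStronglyMeasurable (fun z => bdry q (f z) (g z)) μ := by
  have hfm : AEStronglyMeasurable (fun z => vpow q (f z)) μ :=
    ((measurable_vpow q).comp_aemeasurable hf.aemeasurable).aestronglyMeasurable
  have h1 : AEStronglyMeasurable (fun z => ⟪vpow q (f z), g z - f z⟫) μ :=
    hfm.inner (hg.sub hf)
  exact (((aesm_norm_rpow hq hg).const_mul _).sub ((aesm_norm_rpow hq hf).const_mul _)).sub h1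

lemma integrableOn_bdry {α : Type*} [MeasurableSpace α] {μ : Measure α} (hq : 0 < q)
    {f g : α → EuclideanSpace ℝ (Fin N)} {s : Set α}
    (hf : AEStronglyMeasurable f (μ.restrict s)) (hg : AEStronglyMeasurable g (μ.restrict s))
    (hfi : IntegrableOn (fun z => ‖f z‖ ^ (q+1)) s μ)
    (hgi : IntegrableOn (fun z => ‖g z‖ ^ (q+1)) s μ) :
    IntegrableOn (fun z => bdry q (f z) (g z)) s μ := by
  refine Integrable.mono' ((hfi.add hgi).const_mul 4) (aesm_bdry hq hf hg) ?_
  refine Filter.Eventually.of_forall fun z => ?_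
  simpa [Real.norm_eq_abs, mul_add] using abs_bdry_le hq (f z) (g z)

lemma final_arith (r A1 A3 B0 B1 B2 B3 B4 C1 C2 D1 : ℝ) (hr : 0 ≤ r)
    (h1 : B0 = B3 + B1) (h2 : B0 = B4 + B2) (h3 : 0 ≤ A3) (h4 : 0 ≤ C2) :
    r * (-A1 + B4 - A3) ≤ r * (B1 - A1 - D1) - r * B2 + r * C1 + r * D1
      + r * (C2 + B3 - C1) := by
  have h5 : -A1 + B4 - A3 ≤ (B1 - A1 - D1) - B2 + C1 + D1 + (C2 + B3 - C1) := by linarith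
  calc r * (-A1 + B4 - A3)
      ≤ r * ((B1 - A1 - D1) - B2 + C1 + D1 + (C2 + B3 - C1)) :=
        mul_le_mul_of_nonneg_left h5 hr
    _ = _ := by ring

end Aux

/-- Finite integration by parts formula: for `h ∈ (0,1]` and
`u, v ∈ L^{q+1}(Ω × (−h,T+h), ℝ^N)`,
`∬_{Ω_T} Δ_{−h}(⟦u⟧^q) · (v − u) ≤ ∬_{Ω_T} Δ_h v · (⟦v⟧^q − ⟦u⟧^q)
  − (1/h) ∬_{Ω×(T−h,T)} 𝔟[u(t),v(t+h)] + (1/h) ∬_{Ω×(−h,0)} 𝔟[u(t),v(t)]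
  + δ₁(h) + δ₂(h)`. -/
theorem finite_integration_by_parts (n N : ℕ)
    (Ω : Set (EuclideanSpace ℝ (Fin n))) (hΩo : IsOpen Ω)
    (hΩb : Bornology.IsBounded Ω) (T : ℝ) (hT : 0 < T)
    (q : ℝ) (hq : 0 < q) (h : ℝ) (hh : h ∈ Set.Ioc (0 : ℝ) 1)
    (u v : EuclideanSpace ℝ (Fin n) → ℝ → EuclideanSpace ℝ (Fin N))
    (hu : MemLp (fun z : EuclideanSpace ℝ (Fin n) × ℝ => u z.1 z.2)
      (ENNReal.ofReal (q + 1))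
      ((volume.restrict Ω).prod (volume.restrict (Set.Ioo (-h) (T + h)))))
    (hv : MemLp (fun z : EuclideanSpace ℝ (Fin n) × ℝ => v z.1 z.2)
      (ENNReal.ofReal (q + 1))
      ((volume.restrict Ω).prod (volume.restrict (Set.Ioo (-h) (T + h))))) :
    (∫ t in Set.Ioo (0 : ℝ) T, ∫ x in Ω,
        ⟪(1 / h) • (vpow q (u x t) - vpow q (u x (t - h))), v x t - u x t⟫) ≤
      (∫ t in Set.Ioo (0 : ℝ) T, ∫ x in Ω,
        ⟪(1 / h) • (v x (t + h) - v x t), vpow q (v x t) - vpow q (u x t)⟫)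
      - (1 / h) * (∫ t in Set.Ioo (T - h) T, ∫ x in Ω, bdry q (u x t) (v x (t + h)))
      + (1 / h) * (∫ t in Set.Ioo (-h) (0 : ℝ), ∫ x in Ω, bdry q (u x t) (v x t))
      + (1 / h) * (∫ t in Set.Ioo (0 : ℝ) T, ∫ x in Ω, bdry q (v x t) (v x (t + h)))
      + (∫ t in Set.Ioo (-h) (0 : ℝ), ∫ x in Ω,
          ⟪(1 / h) • (v x (t + h) - v x t), vpow q (v x (t + h)) - vpow q (u x t)⟫) := by
  obtain ⟨hh0, hh1⟩ := hh
  have hq1 : (0:ℝ) < q + 1 := by linarith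
  have hΩm : MeasurableSet Ω := hΩo.measurableSet
  -- rewrite product of restricted measures as a restricted product measure
  have hms : ∀ I : Set ℝ, (volume.restrict I).prod (volume.restrict Ω)
      = (volume : Measure (ℝ × EuclideanSpace ℝ (Fin n))).restrict (I ×ˢ Ω) := by
    intro I
    rw [Measure.prod_restrict, ← Measure.volume_eq_prod]
  -- Fubini helper
  have fub : ∀ (I : Set ℝ) (f : ℝ × EuclideanSpace ℝ (Fin n) → ℝ),
      IntegrableOn f (I ×ˢ Ω) volume →
      (∫ t in I, ∫ x in Ω, f (t, x)) = ∫ z in I ×ˢ Ω, f z := by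
    intro I f hf
    have h1 : Integrable (Function.uncurry fun t x => f (t, x))
        ((volume.restrict I).prod (volume.restrict Ω)) := by
      rw [hms I]; exact hf
    calc (∫ t in I, ∫ x in Ω, f (t, x))
        = ∫ z, f (z.1, z.2) ∂((volume.restrict I).prod (volume.restrict Ω)) :=
          MeasureTheory.integral_integral h1
      _ = ∫ z in I ×ˢ Ω, f z := by rw [hms I]
  -- transport the L^{q+1} hypotheses
  have hU : MemLp (fun z : ℝ × EuclideanSpace ℝ (Fin n) => u z.2 z.1) (ENNReal.ofReal (q+1))
      ((volume : Measure (ℝ × EuclideanSpace ℝ (Fin n))).restrict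
        ((Set.Ioo (-h) (T+h)) ×ˢ Ω)) := by
    rw [← hms (Set.Ioo (-h) (T+h))]
    exact hu.comp_measurePreserving Measure.measurePreserving_swap
  have hV : MemLp (fun z : ℝ × EuclideanSpace ℝ (Fin n) => v z.2 z.1) (ENNReal.ofReal (q+1))
      ((volume : Measure (ℝ × EuclideanSpace ℝ (Fin n))).restrict
        ((Set.Ioo (-h) (T+h)) ×ˢ Ω)) := by
    rw [← hms (Set.Ioo (-h) (T+h))]
    exact hv.comp_measurePreserving Measure.measurePreserving_swap
  have hpne : (ENNReal.ofReal (q+1)) ≠ 0 := by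
    simp only [ne_eq, ENNReal.ofReal_eq_zero, not_le]; linarith
  have hUp : IntegrableOn (fun z : ℝ × EuclideanSpace ℝ (Fin n) => ‖u z.2 z.1‖ ^ (q+1))
      ((Set.Ioo (-h) (T+h)) ×ˢ Ω) volume := by
    have h2 := hU.integrable_norm_rpow hpne ENNReal.ofReal_ne_top
    rwa [ENNReal.toReal_ofReal hq1.le] at h2
  have hVp : IntegrableOn (fun z : ℝ × EuclideanSpace ℝ (Fin n) => ‖v z.2 z.1‖ ^ (q+1))
      ((Set.Ioo (-h) (T+h)) ×ˢ Ω) volume := by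
    have h2 := hV.integrable_norm_rpow hpne ENNReal.ofReal_ne_top
    rwa [ENNReal.toReal_ofReal hq1.le] at h2
  -- time-shift machinery
  have hmp : ∀ γ : ℝ, MeasurePreserving
      (fun z : ℝ × EuclideanSpace ℝ (Fin n) => (z.1 + γ, z.2)) volume volume := by
    intro γ
    have h1 := (measurePreserving_add_right (volume : Measure ℝ) γ).prod
      (MeasurePreserving.id (volume : Measure (EuclideanSpace ℝ (Fin n))))
    rw [← Measure.volume_eq_prod] at h1
    exact h1
  have hemb : ∀ γ : ℝ, MeasurableEmbedding
      (fun z : ℝ × EuclideanSpace ℝ (Fin n) => (z.1 + γ, z.2)) := by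
    intro γ
    exact (MeasurableEquiv.prodCongr (MeasurableEquiv.addRight γ)
      (MeasurableEquiv.refl _)).measurableEmbedding
  have hpre : ∀ (γ a b : ℝ),
      (fun z : ℝ × EuclideanSpace ℝ (Fin n) => (z.1 + γ, z.2)) ⁻¹' ((Set.Ioo a b) ×ˢ Ω)
        = (Set.Ioo (a - γ) (b - γ)) ×ˢ Ω := by
    intro γ a b
    ext z
    simp only [Set.mem_preimage, Set.mem_prod, Set.mem_Ioo]
    constructor
    · rintro ⟨⟨h1, h2⟩, h3⟩; exact ⟨⟨by linarith, by linarith⟩, h3⟩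
    · rintro ⟨⟨h1, h2⟩, h3⟩; exact ⟨⟨by linarith, by linarith⟩, h3⟩
  -- parametrized measurability/integrability of u, v and their time shifts
  have hUS : ∀ S : Set ℝ, S ⊆ Set.Ioo (-h) (T+h) →
      AEStronglyMeasurable (fun z : ℝ × EuclideanSpace ℝ (Fin n) => u z.2 z.1)
        (volume.restrict (S ×ˢ Ω))
      ∧ IntegrableOn (fun z : ℝ × EuclideanSpace ℝ (Fin n) => ‖u z.2 z.1‖ ^ (q+1))
        (S ×ˢ Ω) volume := by
    intro S hS
    have hsub : (S ×ˢ Ω : Set _) ⊆ (Set.Ioo (-h) (T+h)) ×ˢ Ω := Set.prod_mono hS subset_rfl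
    exact ⟨hU.1.mono_measure (Measure.restrict_mono hsub le_rfl), hUp.mono_set hsub⟩
  have hVS : ∀ S : Set ℝ, S ⊆ Set.Ioo (-h) (T+h) →
      AEStronglyMeasurable (fun z : ℝ × EuclideanSpace ℝ (Fin n) => v z.2 z.1)
        (volume.restrict (S ×ˢ Ω))
      ∧ IntegrableOn (fun z : ℝ × EuclideanSpace ℝ (Fin n) => ‖v z.2 z.1‖ ^ (q+1))
        (S ×ˢ Ω) volume := by
    intro S hS
    have hsub : (S ×ˢ Ω : Set _) ⊆ (Set.Ioo (-h) (T+h)) ×ˢ Ω := Set.prod_mono hS subset_rfl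
    exact ⟨hV.1.mono_measure (Measure.restrict_mono hsub le_rfl), hVp.mono_set hsub⟩
  have hJm : MeasurableSet (((Set.Ioo (-h) (T+h)) ×ˢ Ω : Set (ℝ × EuclideanSpace ℝ (Fin n)))) :=
    measurableSet_Ioo.prod hΩm
  have hVsh : ∀ (γ : ℝ) (S : Set ℝ), S ⊆ Set.Ioo (-h - γ) (T + h - γ) →
      AEStronglyMeasurable (fun z : ℝ × EuclideanSpace ℝ (Fin n) => v z.2 (z.1 + γ))
        (volume.restrict (S ×ˢ Ω))
      ∧ IntegrableOn (fun z : ℝ × EuclideanSpace ℝ (Fin n) => ‖v z.2 (z.1 + γ)‖ ^ (q+1))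
        (S ×ˢ Ω) volume := by
    intro γ S hS
    have hmp' := (hmp γ).restrict_preimage hJm
    rw [hpre γ (-h) (T+h)] at hmp'
    have hsm : AEStronglyMeasurable (fun z : ℝ × EuclideanSpace ℝ (Fin n) => v z.2 (z.1 + γ))
        (volume.restrict ((Set.Ioo (-h - γ) (T + h - γ)) ×ˢ Ω)) :=
      hV.1.comp_quasiMeasurePreserving hmp'.quasiMeasurePreserving
    have hip : IntegrableOn (fun z : ℝ × EuclideanSpace ℝ (Fin n) => ‖v z.2 (z.1 + γ)‖ ^ (q+1))
        ((Set.Ioo (-h - γ) (T + h - γ)) ×ˢ Ω) volume :=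
      (hmp'.integrable_comp_emb (hemb γ)
        (g := fun z : ℝ × EuclideanSpace ℝ (Fin n) => ‖v z.2 z.1‖ ^ (q+1))).mpr hVp
    have hsub : (S ×ˢ Ω : Set _) ⊆ (Set.Ioo (-h - γ) (T + h - γ)) ×ˢ Ω :=
      Set.prod_mono hS subset_rfl
    exact ⟨hsm.mono_measure (Measure.restrict_mono hsub le_rfl), hip.mono_set hsub⟩
  have hUsh : ∀ (γ : ℝ) (S : Set ℝ), S ⊆ Set.Ioo (-h - γ) (T + h - γ) →
      AEStronglyMeasurable (fun z : ℝ × EuclideanSpace ℝ (Fin n) => u z.2 (z.1 + γ))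
        (volume.restrict (S ×ˢ Ω))
      ∧ IntegrableOn (fun z : ℝ × EuclideanSpace ℝ (Fin n) => ‖u z.2 (z.1 + γ)‖ ^ (q+1))
        (S ×ˢ Ω) volume := by
    intro γ S hS
    have hmp' := (hmp γ).restrict_preimage hJm
    rw [hpre γ (-h) (T+h)] at hmp'
    have hsm : AEStronglyMeasurable (fun z : ℝ × EuclideanSpace ℝ (Fin n) => u z.2 (z.1 + γ))
        (volume.restrict ((Set.Ioo (-h - γ) (T + h - γ)) ×ˢ Ω)) :=
      hU.1.comp_quasiMeasurePreserving hmp'.quasiMeasurePreserving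
    have hip : IntegrableOn (fun z : ℝ × EuclideanSpace ℝ (Fin n) => ‖u z.2 (z.1 + γ)‖ ^ (q+1))
        ((Set.Ioo (-h - γ) (T + h - γ)) ×ˢ Ω) volume :=
      (hmp'.integrable_comp_emb (hemb γ)
        (g := fun z : ℝ × EuclideanSpace ℝ (Fin n) => ‖u z.2 z.1‖ ^ (q+1))).mpr hUp
    have hsub : (S ×ˢ Ω : Set _) ⊆ (Set.Ioo (-h - γ) (T + h - γ)) ×ˢ Ω :=
      Set.prod_mono hS subset_rfl
    exact ⟨hsm.mono_measure (Measure.restrict_mono hsub le_rfl), hip.mono_set hsub⟩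
  -- integrability of the various boundary-term integrands
  have ig0 : ∀ S : Set ℝ, S ⊆ Set.Ioo (-h) (T+h) →
      IntegrableOn (fun z : ℝ × EuclideanSpace ℝ (Fin n) => bdry q (u z.2 z.1) (v z.2 z.1))
        (S ×ˢ Ω) volume := fun S hS =>
    integrableOn_bdry hq (hUS S hS).1 (hVS S hS).1 (hUS S hS).2 (hVS S hS).2
  have ig1 : ∀ S : Set ℝ, S ⊆ Set.Ioo (-h) T →
      IntegrableOn (fun z : ℝ × EuclideanSpace ℝ (Fin n) => bdry q (u z.2 z.1) (v z.2 (z.1 + h)))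
        (S ×ˢ Ω) volume := by
    intro S hS
    have h1 : S ⊆ Set.Ioo (-h) (T+h) :=
      hS.trans (Set.Ioo_subset_Ioo le_rfl (by linarith))
    have h2 : S ⊆ Set.Ioo (-h - h) (T + h - h) :=
      hS.trans (Set.Ioo_subset_Ioo (by linarith) (by linarith))
    exact integrableOn_bdry hq (hUS S h1).1 (hVsh h S h2).1 (hUS S h1).2 (hVsh h S h2).2
  have ig3 : IntegrableOn
      (fun z : ℝ × EuclideanSpace ℝ (Fin n) => bdry q (u z.2 (z.1 + -h)) (u z.2 z.1))
      ((Set.Ioo (0:ℝ) T) ×ˢ Ω) volume := by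
    have h1 : Set.Ioo (0:ℝ) T ⊆ Set.Ioo (-h - -h) (T + h - -h) :=
      Set.Ioo_subset_Ioo (by linarith) (by linarith)
    have h2 : Set.Ioo (0:ℝ) T ⊆ Set.Ioo (-h) (T+h) :=
      Set.Ioo_subset_Ioo (by linarith) (by linarith)
    exact integrableOn_bdry hq (hUsh (-h) _ h1).1 (hUS _ h2).1 (hUsh (-h) _ h1).2 (hUS _ h2).2
  have ig4 : IntegrableOn
      (fun z : ℝ × EuclideanSpace ℝ (Fin n) => bdry q (v z.2 (z.1 + h)) (v z.2 z.1))
      ((Set.Ioo (-h) (0:ℝ)) ×ˢ Ω) volume := by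
    have h1 : Set.Ioo (-h) (0:ℝ) ⊆ Set.Ioo (-h - h) (T + h - h) :=
      Set.Ioo_subset_Ioo (by linarith) (by linarith)
    have h2 : Set.Ioo (-h) (0:ℝ) ⊆ Set.Ioo (-h) (T+h) :=
      Set.Ioo_subset_Ioo (by linarith) (by linarith)
    exact integrableOn_bdry hq (hVsh h _ h1).1 (hVS _ h2).1 (hVsh h _ h1).2 (hVS _ h2).2
  have ig5 : IntegrableOn
      (fun z : ℝ × EuclideanSpace ℝ (Fin n) => bdry q (v z.2 z.1) (v z.2 (z.1 + h)))
      ((Set.Ioo (0:ℝ) T) ×ˢ Ω) volume := by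
    have h1 : Set.Ioo (0:ℝ) T ⊆ Set.Ioo (-h - h) (T + h - h) :=
      Set.Ioo_subset_Ioo (by linarith) (by linarith)
    have h2 : Set.Ioo (0:ℝ) T ⊆ Set.Ioo (-h) (T+h) :=
      Set.Ioo_subset_Ioo (by linarith) (by linarith)
    exact integrableOn_bdry hq (hVS _ h2).1 (hVsh h _ h1).1 (hVS _ h2).2 (hVsh h _ h1).2
  have hIhThm : MeasurableSet
      (((Set.Ioo (-h) (T-h)) ×ˢ Ω : Set (ℝ × EuclideanSpace ℝ (Fin n)))) :=
    measurableSet_Ioo.prod hΩm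
  have ig1c : IntegrableOn
      (fun z : ℝ × EuclideanSpace ℝ (Fin n) =>
        bdry q (u z.2 (z.1 + -h)) (v z.2 (z.1 + -h + h)))
      ((Set.Ioo (0:ℝ) T) ×ˢ Ω) volume := by
    have h1 := ig1 (Set.Ioo (-h) (T-h)) (Set.Ioo_subset_Ioo le_rfl (by linarith))
    have h3 := (((hmp (-h)).restrict_preimage hIhThm).integrable_comp_emb (hemb (-h))
      (g := fun z : ℝ × EuclideanSpace ℝ (Fin n) =>
        bdry q (u z.2 z.1) (v z.2 (z.1 + h)))).mpr h1
    rw [hpre (-h) (-h) (T - h), show (-h - -h : ℝ) = 0 by ring,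
      show (T - h - -h : ℝ) = T by ring] at h3
    exact h3
  -- translation identity
  have etrans : (∫ z in (Set.Ioo (0:ℝ) T) ×ˢ Ω,
        bdry q (u z.2 (z.1 + -h)) (v z.2 (z.1 + -h + h)))
      = ∫ z in (Set.Ioo (-h) (T - h)) ×ˢ Ω, bdry q (u z.2 z.1) (v z.2 (z.1 + h)) := by
    have h1 := (hmp (-h)).setIntegral_preimage_emb (hemb (-h))
      (fun z : ℝ × EuclideanSpace ℝ (Fin n) => bdry q (u z.2 z.1) (v z.2 (z.1 + h)))
      ((Set.Ioo (-h) (T - h)) ×ˢ Ω)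
    rw [hpre (-h) (-h) (T - h), show (-h - -h : ℝ) = 0 by ring,
      show (T - h - -h : ℝ) = T by ring] at h1
    exact h1
  -- splitting of integrals over time intervals
  have hnull : ∀ c : ℝ,
      (volume : Measure (ℝ × EuclideanSpace ℝ (Fin n))) ({c} ×ˢ (Set.univ)) = 0 := by
    intro c
    rw [Measure.volume_eq_prod, Measure.prod_prod]
    simp
  have haeq : ∀ a b : ℝ, ((Set.Ioo a b) ×ˢ Ω : Set (ℝ × EuclideanSpace ℝ (Fin n)))
      =ᵐ[volume] (Set.Ioc a b) ×ˢ Ω := by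
    intro a b
    rw [MeasureTheory.ae_eq_set]
    constructor
    · refine measure_mono_null ?_ (hnull b)
      rintro ⟨t, x⟩ ⟨⟨⟨h1, h2⟩, h3⟩, h4⟩
      exact absurd ⟨⟨h1, h2.le⟩, h3⟩ h4
    · refine measure_mono_null ?_ (hnull b)
      rintro ⟨t, x⟩ ⟨⟨⟨h1, h2⟩, h3⟩, h4⟩
      have ht : t = b := by
        by_contra hne
        exact h4 ⟨⟨h1, lt_of_le_of_ne h2 hne⟩, h3⟩
      simp [Set.mem_prod, ht]
  have hsplitg : ∀ (a c b : ℝ), a < c → c < b →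
      ∀ g : ℝ × EuclideanSpace ℝ (Fin n) → ℝ, IntegrableOn g ((Set.Ioo a b) ×ˢ Ω) volume →
      (∫ z in (Set.Ioo a b) ×ˢ Ω, g z)
        = (∫ z in (Set.Ioo a c) ×ˢ Ω, g z) + ∫ z in (Set.Ioo c b) ×ˢ Ω, g z := by
    intro a c b hac hcb g hg
    have e1 : (∫ z in (Set.Ioo a b) ×ˢ Ω, g z) = ∫ z in (Set.Ioc a b) ×ˢ Ω, g z :=
      setIntegral_congr_set (haeq a b)
    have e2 : (∫ z in (Set.Ioo a c) ×ˢ Ω, g z) = ∫ z in (Set.Ioc a c) ×ˢ Ω, g z :=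
      setIntegral_congr_set (haeq a c)
    have e3 : (∫ z in (Set.Ioo c b) ×ˢ Ω, g z) = ∫ z in (Set.Ioc c b) ×ˢ Ω, g z :=
      setIntegral_congr_set (haeq c b)
    have hgIoc : IntegrableOn g ((Set.Ioc a b) ×ˢ Ω) volume :=
      hg.congr_set_ae ((haeq a b).symm)
    have hdis : Disjoint ((Set.Ioc a c) ×ˢ Ω : Set (ℝ × EuclideanSpace ℝ (Fin n)))
        ((Set.Ioc c b) ×ˢ Ω) := by
      rw [Set.disjoint_left]
      rintro ⟨t, x⟩ ⟨⟨h1, h2⟩, h3⟩ ⟨⟨h4, h5⟩, h6⟩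
      exact absurd h4 (not_lt.2 h2)
    have hun : ((Set.Ioc a b) ×ˢ Ω : Set (ℝ × EuclideanSpace ℝ (Fin n)))
        = ((Set.Ioc a c) ×ˢ Ω) ∪ ((Set.Ioc c b) ×ˢ Ω) := by
      rw [← Set.union_prod, Set.Ioc_union_Ioc_eq_Ioc hac.le hcb.le]
    rw [e1, e2, e3, hun, setIntegral_union hdis (measurableSet_Ioc.prod hΩm)
      (hgIoc.mono_set (Set.prod_mono (Set.Ioc_subset_Ioc le_rfl hcb.le) subset_rfl))
      (hgIoc.mono_set (Set.prod_mono (Set.Ioc_subset_Ioc hac.le le_rfl) subset_rfl))]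
  -- the six iterated integrals as product integrals
  have eqL : (∫ t in Set.Ioo (0 : ℝ) T, ∫ x in Ω,
        ⟪(1 / h) • (vpow q (u x t) - vpow q (u x (t - h))), v x t - u x t⟫)
      = (1/h) * (-(∫ z in (Set.Ioo (0:ℝ) T) ×ˢ Ω, bdry q (u z.2 z.1) (v z.2 z.1))
          + (∫ z in (Set.Ioo (0:ℝ) T) ×ˢ Ω,
              bdry q (u z.2 (z.1 + -h)) (v z.2 (z.1 + -h + h)))
          - (∫ z in (Set.Ioo (0:ℝ) T) ×ˢ Ω, bdry q (u z.2 (z.1 + -h)) (u z.2 z.1))) := by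
    have hI : Set.Ioo (0:ℝ) T ⊆ Set.Ioo (-h) (T+h) :=
      Set.Ioo_subset_Ioo (by linarith) (by linarith)
    have hint : IntegrableOn (fun z : ℝ × EuclideanSpace ℝ (Fin n) =>
        (1/h) * (-(bdry q (u z.2 z.1) (v z.2 z.1))
          + bdry q (u z.2 (z.1 + -h)) (v z.2 (z.1 + -h + h))
          - bdry q (u z.2 (z.1 + -h)) (u z.2 z.1)))
        ((Set.Ioo (0:ℝ) T) ×ˢ Ω) volume :=
      ((((ig0 _ hI).neg'.add ig1c).sub ig3).const_mul (1/h))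
    have e1 : (∫ t in Set.Ioo (0 : ℝ) T, ∫ x in Ω,
          ⟪(1 / h) • (vpow q (u x t) - vpow q (u x (t - h))), v x t - u x t⟫)
        = ∫ t in Set.Ioo (0 : ℝ) T, ∫ x in Ω,
            (1/h) * (-(bdry q (u x t) (v x t))
              + bdry q (u x (t + -h)) (v x (t + -h + h))
              - bdry q (u x (t + -h)) (u x t)) := by
      refine integral_congr_ae (Filter.Eventually.of_forall fun t => ?_)
      refine integral_congr_ae (Filter.Eventually.of_forall fun x => ?_)
      beta_reduce
      rw [show t + -h + h = t by ring, show t + -h = t - h by ring,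
        real_inner_smul_left, id_L]
    rw [e1]
    calc (∫ t in Set.Ioo (0 : ℝ) T, ∫ x in Ω,
          (1/h) * (-(bdry q (u x t) (v x t))
            + bdry q (u x (t + -h)) (v x (t + -h + h))
            - bdry q (u x (t + -h)) (u x t)))
        = ∫ z in (Set.Ioo (0:ℝ) T) ×ˢ Ω,
            (fun z : ℝ × EuclideanSpace ℝ (Fin n) =>
              (1/h) * (-(bdry q (u z.2 z.1) (v z.2 z.1))
                + bdry q (u z.2 (z.1 + -h)) (v z.2 (z.1 + -h + h))
                - bdry q (u z.2 (z.1 + -h)) (u z.2 z.1))) z :=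
          fub _ _ hint
      _ = _ := by
          have hA : Integrable (fun z : ℝ × EuclideanSpace ℝ (Fin n) =>
              -(bdry q (u z.2 z.1) (v z.2 z.1)))
              (volume.restrict ((Set.Ioo (0:ℝ) T) ×ˢ Ω)) := (ig0 _ hI).neg'
          have hAB : Integrable (fun z : ℝ × EuclideanSpace ℝ (Fin n) =>
              -(bdry q (u z.2 z.1) (v z.2 z.1))
                + bdry q (u z.2 (z.1 + -h)) (v z.2 (z.1 + -h + h)))
              (volume.restrict ((Set.Ioo (0:ℝ) T) ×ˢ Ω)) := hA.add ig1c
          rw [integral_const_mul, integral_sub hAB ig3, integral_add hA ig1c, integral_neg]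
  have eq1 : (∫ t in Set.Ioo (0 : ℝ) T, ∫ x in Ω,
        ⟪(1 / h) • (v x (t + h) - v x t), vpow q (v x t) - vpow q (u x t)⟫)
      = (1/h) * ((∫ z in (Set.Ioo (0:ℝ) T) ×ˢ Ω, bdry q (u z.2 z.1) (v z.2 (z.1 + h)))
          - (∫ z in (Set.Ioo (0:ℝ) T) ×ˢ Ω, bdry q (u z.2 z.1) (v z.2 z.1))
          - (∫ z in (Set.Ioo (0:ℝ) T) ×ˢ Ω, bdry q (v z.2 z.1) (v z.2 (z.1 + h)))) := by
    have hI : Set.Ioo (0:ℝ) T ⊆ Set.Ioo (-h) (T+h) :=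
      Set.Ioo_subset_Ioo (by linarith) (by linarith)
    have hI' : Set.Ioo (0:ℝ) T ⊆ Set.Ioo (-h) T :=
      Set.Ioo_subset_Ioo (by linarith) le_rfl
    have hint : IntegrableOn (fun z : ℝ × EuclideanSpace ℝ (Fin n) =>
        (1/h) * (bdry q (u z.2 z.1) (v z.2 (z.1 + h))
          - bdry q (u z.2 z.1) (v z.2 z.1)
          - bdry q (v z.2 z.1) (v z.2 (z.1 + h))))
        ((Set.Ioo (0:ℝ) T) ×ˢ Ω) volume :=
      ((((ig1 _ hI').sub (ig0 _ hI)).sub ig5).const_mul (1/h))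
    have e1 : (∫ t in Set.Ioo (0 : ℝ) T, ∫ x in Ω,
          ⟪(1 / h) • (v x (t + h) - v x t), vpow q (v x t) - vpow q (u x t)⟫)
        = ∫ t in Set.Ioo (0 : ℝ) T, ∫ x in Ω,
            (1/h) * (bdry q (u x t) (v x (t + h))
              - bdry q (u x t) (v x t)
              - bdry q (v x t) (v x (t + h))) := by
      refine integral_congr_ae (Filter.Eventually.of_forall fun t => ?_)
      refine integral_congr_ae (Filter.Eventually.of_forall fun x => ?_)
      beta_reduce
      rw [real_inner_smul_left, id_R1]
    rw [e1]
    calc (∫ t in Set.Ioo (0 : ℝ) T, ∫ x in Ω,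
          (1/h) * (bdry q (u x t) (v x (t + h))
            - bdry q (u x t) (v x t)
            - bdry q (v x t) (v x (t + h))))
        = ∫ z in (Set.Ioo (0:ℝ) T) ×ˢ Ω,
            (fun z : ℝ × EuclideanSpace ℝ (Fin n) =>
              (1/h) * (bdry q (u z.2 z.1) (v z.2 (z.1 + h))
                - bdry q (u z.2 z.1) (v z.2 z.1)
                - bdry q (v z.2 z.1) (v z.2 (z.1 + h)))) z :=
          fub _ _ hint
      _ = _ := by
          have hAB : Integrable (fun z : ℝ × EuclideanSpace ℝ (Fin n) =>
              bdry q (u z.2 z.1) (v z.2 (z.1 + h)) - bdry q (u z.2 z.1) (v z.2 z.1))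
              (volume.restrict ((Set.Ioo (0:ℝ) T) ×ˢ Ω)) := (ig1 _ hI').sub (ig0 _ hI)
          rw [integral_const_mul, integral_sub hAB ig5, integral_sub (ig1 _ hI') (ig0 _ hI)]
  have eq2 : (∫ t in Set.Ioo (T - h) T, ∫ x in Ω, bdry q (u x t) (v x (t + h)))
      = ∫ z in (Set.Ioo (T-h) T) ×ˢ Ω, bdry q (u z.2 z.1) (v z.2 (z.1 + h)) :=
    fub _ _ (ig1 _ (Set.Ioo_subset_Ioo (by linarith) le_rfl))
  have eq3 : (∫ t in Set.Ioo (-h) (0 : ℝ), ∫ x in Ω, bdry q (u x t) (v x t))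
      = ∫ z in (Set.Ioo (-h) (0:ℝ)) ×ˢ Ω, bdry q (u z.2 z.1) (v z.2 z.1) :=
    fub _ _ (ig0 _ (Set.Ioo_subset_Ioo le_rfl (by linarith)))
  have eq4 : (∫ t in Set.Ioo (0 : ℝ) T, ∫ x in Ω, bdry q (v x t) (v x (t + h)))
      = ∫ z in (Set.Ioo (0:ℝ) T) ×ˢ Ω, bdry q (v z.2 z.1) (v z.2 (z.1 + h)) :=
    fub _ _ ig5
  have eq5 : (∫ t in Set.Ioo (-h) (0 : ℝ), ∫ x in Ω,
        ⟪(1 / h) • (v x (t + h) - v x t), vpow q (v x (t + h)) - vpow q (u x t)⟫)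
      = (1/h) * ((∫ z in (Set.Ioo (-h) (0:ℝ)) ×ˢ Ω, bdry q (v z.2 (z.1 + h)) (v z.2 z.1))
          + (∫ z in (Set.Ioo (-h) (0:ℝ)) ×ˢ Ω, bdry q (u z.2 z.1) (v z.2 (z.1 + h)))
          - (∫ z in (Set.Ioo (-h) (0:ℝ)) ×ˢ Ω, bdry q (u z.2 z.1) (v z.2 z.1))) := by
    have hI : Set.Ioo (-h) (0:ℝ) ⊆ Set.Ioo (-h) (T+h) :=
      Set.Ioo_subset_Ioo le_rfl (by linarith)
    have hI' : Set.Ioo (-h) (0:ℝ) ⊆ Set.Ioo (-h) T :=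
      Set.Ioo_subset_Ioo le_rfl (by linarith)
    have hint : IntegrableOn (fun z : ℝ × EuclideanSpace ℝ (Fin n) =>
        (1/h) * (bdry q (v z.2 (z.1 + h)) (v z.2 z.1)
          + bdry q (u z.2 z.1) (v z.2 (z.1 + h))
          - bdry q (u z.2 z.1) (v z.2 z.1)))
        ((Set.Ioo (-h) (0:ℝ)) ×ˢ Ω) volume :=
      (((ig4.add (ig1 _ hI')).sub (ig0 _ hI)).const_mul (1/h))
    have e1 : (∫ t in Set.Ioo (-h) (0 : ℝ), ∫ x in Ω,
          ⟪(1 / h) • (v x (t + h) - v x t), vpow q (v x (t + h)) - vpow q (u x t)⟫)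
        = ∫ t in Set.Ioo (-h) (0 : ℝ), ∫ x in Ω,
            (1/h) * (bdry q (v x (t + h)) (v x t)
              + bdry q (u x t) (v x (t + h))
              - bdry q (u x t) (v x t)) := by
      refine integral_congr_ae (Filter.Eventually.of_forall fun t => ?_)
      refine integral_congr_ae (Filter.Eventually.of_forall fun x => ?_)
      beta_reduce
      rw [real_inner_smul_left, id_R5]
    rw [e1]
    calc (∫ t in Set.Ioo (-h) (0 : ℝ), ∫ x in Ω,
          (1/h) * (bdry q (v x (t + h)) (v x t)
            + bdry q (u x t) (v x (t + h))
            - bdry q (u x t) (v x t)))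
        = ∫ z in (Set.Ioo (-h) (0:ℝ)) ×ˢ Ω,
            (fun z : ℝ × EuclideanSpace ℝ (Fin n) =>
              (1/h) * (bdry q (v z.2 (z.1 + h)) (v z.2 z.1)
                + bdry q (u z.2 z.1) (v z.2 (z.1 + h))
                - bdry q (u z.2 z.1) (v z.2 z.1))) z :=
          fub _ _ hint
      _ = _ := by
          have hAB : Integrable (fun z : ℝ × EuclideanSpace ℝ (Fin n) =>
              bdry q (v z.2 (z.1 + h)) (v z.2 z.1) + bdry q (u z.2 z.1) (v z.2 (z.1 + h)))
              (volume.restrict ((Set.Ioo (-h) (0:ℝ)) ×ˢ Ω)) := ig4.add (ig1 _ hI')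
          rw [integral_const_mul, integral_sub hAB (ig0 _ hI), integral_add ig4 (ig1 _ hI')]
  -- splitting identities
  have esplit1 : (∫ z in (Set.Ioo (-h) T) ×ˢ Ω, bdry q (u z.2 z.1) (v z.2 (z.1 + h)))
      = (∫ z in (Set.Ioo (-h) (0:ℝ)) ×ˢ Ω, bdry q (u z.2 z.1) (v z.2 (z.1 + h)))
        + ∫ z in (Set.Ioo (0:ℝ) T) ×ˢ Ω, bdry q (u z.2 z.1) (v z.2 (z.1 + h)) :=
    hsplitg (-h) 0 T (by linarith) hT _ (ig1 _ subset_rfl)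
  have esplit2 : (∫ z in (Set.Ioo (-h) T) ×ˢ Ω, bdry q (u z.2 z.1) (v z.2 (z.1 + h)))
      = (∫ z in (Set.Ioo (-h) (T-h)) ×ˢ Ω, bdry q (u z.2 z.1) (v z.2 (z.1 + h)))
        + ∫ z in (Set.Ioo (T-h) T) ×ˢ Ω, bdry q (u z.2 z.1) (v z.2 (z.1 + h)) :=
    hsplitg (-h) (T-h) T (by linarith) (by linarith) _ (ig1 _ subset_rfl)
  have nn3 : 0 ≤ ∫ z in (Set.Ioo (0:ℝ) T) ×ˢ Ω, bdry q (u z.2 (z.1 + -h)) (u z.2 z.1) :=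
    setIntegral_nonneg (measurableSet_Ioo.prod hΩm) fun z _ => bdry_nonneg hq _ _
  have nn4 : 0 ≤ ∫ z in (Set.Ioo (-h) (0:ℝ)) ×ˢ Ω, bdry q (v z.2 (z.1 + h)) (v z.2 z.1) :=
    setIntegral_nonneg (measurableSet_Ioo.prod hΩm) fun z _ => bdry_nonneg hq _ _
  rw [eqL, etrans, eq1, eq2, eq3, eq4, eq5]
  exact final_arith (1/h) _ _ _ _ _ _ _ _ _ _ (by positivity) esplit1 esplit2 nn3 nn4
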